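/- With μ_min = min over (n,k,m) of a·b·r·E[U'((1−a·e^{−b·P·γ})r)·γ·e^{−b·P·γ}] and μ_max = max over (n,k,m) of a·b·r·U'((1−a)r)·E[γ] (with per-(k,m) constants a ∈ (0,1], b, r > 0 and nonnegative random SNRs γ with finite positive mean), one has 0 < μ_min ≤ μ_max; and for any μ > μ_max the optimal power allocation p*(μ) defined by the water-filling condition is identically zero for every (n,k,m). -/

import Mathlib

open MeasureTheory

/-- Bounds on the optimal dual variable: `0 < μ_min ≤ μ_max`, and for `μ > μ_max`
the water-filling condition has no solution with `p ≥ 0`, so the optimal power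
allocation is identically zero. -/
theorem stmt15 {Ω ι : Type*} [Fintype ι] [Nonempty ι] [MeasurableSpace Ω]
    (Pr : Measure Ω) [IsProbabilityMeasure Pr]
    (a b r : ι → ℝ) (ha : ∀ i, 0 < a i) (ha1 : ∀ i, a i ≤ 1)
    (hb : ∀ i, 0 < b i) (hr : ∀ i, 0 < r i)
    (U : ι → ℝ → ℝ) (hUdiff : ∀ i, Differentiable ℝ (U i))
    (hU' : ∀ i (x : ℝ), 0 < deriv (U i) x)
    (hUconc : ∀ i, ConcaveOn ℝ Set.univ (U i))
    (γ : ι → Ω → ℝ) (hγ0 : ∀ i ω, 0 ≤ γ i ω)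
    (hγint : ∀ i, Integrable (γ i) Pr)
    (hγpos : ∀ i, 0 < ∫ ω, γ i ω ∂Pr)
    (Pcon : ℝ) (hP : 0 < Pcon)
    (hint : ∀ i (p : ℝ), Integrable (fun ω =>
      deriv (U i) ((1 - a i * Real.exp (-b i * p * γ i ω)) * r i) * γ i ω *
        Real.exp (-b i * p * γ i ω)) Pr)
    (μmin μmax : ℝ)
    (hμmin : μmin = ⨅ i, a i * b i * r i * ∫ ω,
      deriv (U i) ((1 - a i * Real.exp (-b i * Pcon * γ i ω)) * r i) * γ i ω *
        Real.exp (-b i * Pcon * γ i ω) ∂Pr)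
    (hμmax : μmax = ⨆ i, a i * b i * r i * deriv (U i) ((1 - a i) * r i) *
      ∫ ω, γ i ω ∂Pr) :
    0 < μmin ∧ μmin ≤ μmax ∧
    ∀ μ : ℝ, μmax < μ → ∀ i, ∀ p : ℝ, 0 ≤ p →
      μ ≠ a i * b i * r i * ∫ ω,
        deriv (U i) ((1 - a i * Real.exp (-b i * p * γ i ω)) * r i) * γ i ω *
          Real.exp (-b i * p * γ i ω) ∂Pr := by
  -- key bound: for p ≥ 0, the integral term is at most its value with exp ≤ 1, U' max
  have key : ∀ i (p : ℝ), 0 ≤ p →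
      a i * b i * r i * ∫ ω,
        deriv (U i) ((1 - a i * Real.exp (-b i * p * γ i ω)) * r i) * γ i ω *
          Real.exp (-b i * p * γ i ω) ∂Pr ≤
      a i * b i * r i * deriv (U i) ((1 - a i) * r i) * ∫ ω, γ i ω ∂Pr := by
    intro i p hp
    have habr : 0 ≤ a i * b i * r i :=
      mul_nonneg (mul_nonneg (ha i).le (hb i).le) (hr i).le
    set c := deriv (U i) ((1 - a i) * r i) with hc
    have hanti : Antitone (deriv (U i)) := by
      intro x y hxy
      exact (hUconc i).antitoneOn_deriv (fun z _ => (hUdiff i z)) (Set.mem_univ x)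
        (Set.mem_univ y) hxy
    have hpt : ∀ ω, deriv (U i) ((1 - a i * Real.exp (-b i * p * γ i ω)) * r i) * γ i ω *
        Real.exp (-b i * p * γ i ω) ≤ c * γ i ω := by
      intro ω
      have hexp1 : Real.exp (-b i * p * γ i ω) ≤ 1 := by
        apply Real.exp_le_one_iff.mpr
        have : 0 ≤ b i * p * γ i ω := mul_nonneg (mul_nonneg (hb i).le hp) (hγ0 i ω)
        nlinarith
      have hexp0 : 0 < Real.exp (-b i * p * γ i ω) := Real.exp_pos _
      have harg : (1 - a i) * r i ≤ (1 - a i * Real.exp (-b i * p * γ i ω)) * r i := by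
        apply mul_le_mul_of_nonneg_right _ (hr i).le
        nlinarith [ha i]
      have hU'le : deriv (U i) ((1 - a i * Real.exp (-b i * p * γ i ω)) * r i) ≤ c :=
        hanti harg
      have hU'pos := hU' i ((1 - a i * Real.exp (-b i * p * γ i ω)) * r i)
      nlinarith [mul_le_mul_of_nonneg_left hexp1 (mul_nonneg hU'pos.le (hγ0 i ω)),
        mul_le_mul_of_nonneg_right hU'le (hγ0 i ω)]
    have hInt := integral_mono (hint i p) ((hγint i).const_mul c) hpt
    rw [integral_const_mul] at hInt
    calc a i * b i * r i * ∫ ω,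
          deriv (U i) ((1 - a i * Real.exp (-b i * p * γ i ω)) * r i) * γ i ω *
            Real.exp (-b i * p * γ i ω) ∂Pr
        ≤ a i * b i * r i * (c * ∫ ω, γ i ω ∂Pr) := by
          exact mul_le_mul_of_nonneg_left hInt habr
      _ = a i * b i * r i * c * ∫ ω, γ i ω ∂Pr := by ring
  -- positivity of each infimum term
  have hpos : ∀ i, 0 < a i * b i * r i * ∫ ω,
      deriv (U i) ((1 - a i * Real.exp (-b i * Pcon * γ i ω)) * r i) * γ i ω *
        Real.exp (-b i * Pcon * γ i ω) ∂Pr := by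
    intro i
    have habr : 0 < a i * b i * r i :=
      mul_pos (mul_pos (ha i) (hb i)) (hr i)
    refine mul_pos habr ?_
    have hnn : 0 ≤ fun ω => deriv (U i) ((1 - a i * Real.exp (-b i * Pcon * γ i ω)) * r i) *
        γ i ω * Real.exp (-b i * Pcon * γ i ω) := by
      intro ω
      exact mul_nonneg (mul_nonneg (hU' i _).le (hγ0 i ω)) (Real.exp_pos _).le
    rw [integral_pos_iff_support_of_nonneg hnn (hint i Pcon)]
    have hsub : Function.support (γ i) ⊆ Function.support fun ω =>
        deriv (U i) ((1 - a i * Real.exp (-b i * Pcon * γ i ω)) * r i) *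
          γ i ω * Real.exp (-b i * Pcon * γ i ω) := by
      intro ω hω
      simp only [Function.mem_support] at hω ⊢
      have := hU' i ((1 - a i * Real.exp (-b i * Pcon * γ i ω)) * r i)
      have := Real.exp_pos (-b i * Pcon * γ i ω)
      positivity
    have hγsupp : 0 < Pr (Function.support (γ i)) := by
      have h := hγpos i
      rw [integral_pos_iff_support_of_nonneg (fun ω => hγ0 i ω) (hγint i)] at h
      exact h
    exact lt_of_lt_of_le hγsupp (measure_mono hsub)
  have hbdd_below : BddBelow (Set.range fun i => a i * b i * r i * ∫ ω,
      deriv (U i) ((1 - a i * Real.exp (-b i * Pcon * γ i ω)) * r i) * γ i ω *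
        Real.exp (-b i * Pcon * γ i ω) ∂Pr) := (Set.finite_range _).bddBelow
  have hbdd_above : BddAbove (Set.range fun i => a i * b i * r i *
      deriv (U i) ((1 - a i) * r i) * ∫ ω, γ i ω ∂Pr) := (Set.finite_range _).bddAbove
  refine ⟨?_, ?_, ?_⟩
  · rw [hμmin]
    obtain ⟨j, hj⟩ := exists_eq_ciInf_of_finite (f := fun i => a i * b i * r i * ∫ ω,
      deriv (U i) ((1 - a i * Real.exp (-b i * Pcon * γ i ω)) * r i) * γ i ω *
        Real.exp (-b i * Pcon * γ i ω) ∂Pr)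
    rw [← hj]; exact hpos j
  · rw [hμmin, hμmax]
    obtain ⟨j, hj⟩ := exists_eq_ciInf_of_finite (f := fun i => a i * b i * r i * ∫ ω,
      deriv (U i) ((1 - a i * Real.exp (-b i * Pcon * γ i ω)) * r i) * γ i ω *
        Real.exp (-b i * Pcon * γ i ω) ∂Pr)
    rw [← hj]
    exact le_trans (key j Pcon hP.le) (le_ciSup hbdd_above j)
  · intro μ hμ i p hp heq
    have h1 : a i * b i * r i * deriv (U i) ((1 - a i) * r i) * ∫ ω, γ i ω ∂Pr ≤ μmax := by
      rw [hμmax]; exact le_ciSup hbdd_above i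
    have := key i p hp
    linarith [heq ▸ this]
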